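/- Let r ≥ 4 be an integer. There exists a constant c > 0 such that for every odd prime power q, every T ∈ M_2(𝔽_q), and every 𝐌 ∈ (M_2(𝔽_q))^r with 𝐌 ≠ 0, the Fourier transform of the matrix sphere satisfies |σ̂_T(𝐌)| ≤ c·q^{−r−1}. -/

import Mathlib

open scoped BigOperators

/-- The additive character `ψ(X) = exp((2πi/p)·Tr_{F/F_p}(Tr X))` on `n × n` matrices
over a finite field `F` of characteristic `p`. -/
noncomputable def psi (F : Type) [Field F] [Fintype F] {n : ℕ}
    (X : Matrix (Fin n) (Fin n) F) : ℂ :=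
  letI : Algebra (ZMod (ringChar F)) F := ZMod.algebra _ _
  Complex.exp (2 * Real.pi * Complex.I *
    (((Algebra.trace (ZMod (ringChar F)) F X.trace).val : ℂ) / (ringChar F : ℂ)))

/-- The radical `{X : Tr(A(XY+YX)) = 0 for all Y}` of the quadratic form
`X ↦ Tr(AX²)` on `M_n(F)`. -/
def radical (F : Type) [Field F] [Fintype F] {n : ℕ}
    (A : Matrix (Fin n) (Fin n) F) : Submodule F (Matrix (Fin n) (Fin n) F) where
  carrier := {X : Matrix (Fin n) (Fin n) F |
    ∀ Y : Matrix (Fin n) (Fin n) F, (A * (X * Y + Y * X)).trace = 0}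
  zero_mem' := by intro Y; simp
  add_mem' := by
    intro X₁ X₂ h₁ h₂ Y
    have e : A * ((X₁ + X₂) * Y + Y * (X₁ + X₂))
        = A * (X₁ * Y + Y * X₁) + A * (X₂ * Y + Y * X₂) := by noncomm_ring
    show (A * ((X₁ + X₂) * Y + Y * (X₁ + X₂))).trace = 0
    rw [e, Matrix.trace_add, h₁ Y, h₂ Y, add_zero]
  smul_mem' := by
    intro c X h Y
    have e : A * ((c • X) * Y + Y * (c • X)) = c • (A * (X * Y + Y * X)) := by
      rw [smul_mul_assoc, Matrix.mul_smul, ← smul_add, Matrix.mul_smul]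
    show (A * ((c • X) * Y + Y * (c • X))).trace = 0
    rw [e, Matrix.trace_smul, h Y, smul_zero]

/-- The radical invariant `ρ_A`: the `F`-dimension of the radical of `X ↦ Tr(AX²)`. -/
noncomputable def rho (F : Type) [Field F] [Fintype F] {n : ℕ}
    (A : Matrix (Fin n) (Fin n) F) : ℕ :=
  Module.finrank F (radical F A)

/-- The quadratic matrix Gauss sum `G(A,B) = Σ_X ψ(AX² + BX)`. -/
noncomputable def matGaussSum (F : Type) [Field F] [Fintype F] {n : ℕ}
    (A B : Matrix (Fin n) (Fin n) F) : ℂ :=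
  ∑ X : Matrix (Fin n) (Fin n) F, psi F (A * X ^ 2 + B * X)

/-- The matrix sphere `σ_T = {X ∈ M_n(F)^r : X₁² + ⋯ + X_r² = T}`. -/
def matSphere (F : Type) [Field F] [Fintype F] [DecidableEq F] {n : ℕ} (r : ℕ)
    (T : Matrix (Fin n) (Fin n) F) : Finset (Fin r → Matrix (Fin n) (Fin n) F) :=
  Finset.univ.filter (fun X => ∑ i, (X i) ^ 2 = T)

/-- The Fourier transform `f̂(M) = q^{-rn²} Σ_A f(A) conj(ψ(M·A))` on `M_n(F)^r`. -/
noncomputable def matFourier (F : Type) [Field F] [Fintype F] {n r : ℕ}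
    (f : (Fin r → Matrix (Fin n) (Fin n) F) → ℂ)
    (M : Fin r → Matrix (Fin n) (Fin n) F) : ℂ :=
  ((Fintype.card F : ℂ) ^ (r * n ^ 2))⁻¹ *
    ∑ A : Fin r → Matrix (Fin n) (Fin n) F, f A * (starRingEnd ℂ) (psi F (∑ i, M i * A i))


set_option linter.unusedSectionVars false
set_option maxHeartbeats 1000000

namespace MatAux

variable (F : Type) [Field F] [Fintype F]

instance factPrime : Fact (ringChar F).Prime := ⟨CharP.char_is_prime F _⟩

noncomputable def chi : AddChar F ℂ :=
  letI : Algebra (ZMod (ringChar F)) F := ZMod.algebra _ _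
  (ZMod.stdAddChar (N := ringChar F)).compAddMonoidHom
    (Algebra.trace (ZMod (ringChar F)) F).toAddMonoidHom

lemma psi_eq {n : ℕ} (X : Matrix (Fin n) (Fin n) F) : psi F X = chi F X.trace := by
  rw [psi, chi]
  rw [AddChar.compAddMonoidHom_apply, ZMod.stdAddChar_apply, ZMod.toCircle_apply]
  simp only [LinearMap.toAddMonoidHom_coe]
  norm_num
  ring_nf

end MatAux

namespace MatAux2
open MatAux

variable (F : Type) [Field F] [Fintype F]

lemma abs_chi (x : F) : ‖chi F x‖ = 1 := by
  show ‖ZMod.stdAddChar _‖ = 1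
  rw [ZMod.stdAddChar_apply]
  exact Circle.norm_coe _

lemma chi_mulShift_ne (a : F) (ha : a ≠ 0) : AddChar.mulShift (chi F) a ≠ 0 := by
  letI : Algebra (ZMod (ringChar F)) F := ZMod.algebra _ _
  haveI : Module.Finite (ZMod (ringChar F)) F := Module.Finite.of_finite
  obtain ⟨x, hx⟩ := Algebra.trace_surjective (ZMod (ringChar F)) F 1
  rw [AddChar.ne_zero_iff]
  refine ⟨a⁻¹ * x, ?_⟩
  have : a * (a⁻¹ * x) = x := by field_simp
  rw [AddChar.mulShift_apply, this]
  show (ZMod.stdAddChar (N := ringChar F)) _ ≠ 1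
  simp only [LinearMap.toAddMonoidHom_coe]
  rw [hx]
  intro h
  have h0 : (ZMod.stdAddChar (N := ringChar F)) 0 = 1 := AddChar.map_zero_eq_one _
  have := ZMod.injective_stdAddChar (h.trans h0.symm)
  exact one_ne_zero this

end MatAux2

namespace MatAux3
open MatAux MatAux2

variable (F : Type) [Field F] [Fintype F] {n : ℕ}

lemma trace_mul_std (C : Matrix (Fin n) (Fin n) F) (i j : Fin n) (t : F) :
    (C * Matrix.single j i t).trace = C i j * t := by
  classical
  rw [Matrix.trace]
  simp only [Matrix.diag_apply, Matrix.mul_apply, Matrix.single]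
  rw [Finset.sum_comm]
  simp [ite_and, Finset.sum_ite_eq, mul_comm]

/-- `Y ↦ ψ(CY)` as an additive character on matrices. -/
noncomputable def psiM (C : Matrix (Fin n) (Fin n) F) :
    AddChar (Matrix (Fin n) (Fin n) F) ℂ :=
  (chi F).compAddMonoidHom
    { toFun := fun Y => (C * Y).trace
      map_zero' := by simp
      map_add' := by intro Y Z; show (C * (Y + Z)).trace = _; rw [Matrix.mul_add, Matrix.trace_add] }

lemma psiM_apply (C Y : Matrix (Fin n) (Fin n) F) : psiM F C Y = chi F (C * Y).trace := rfl

lemma card_matrix : Fintype.card (Matrix (Fin n) (Fin n) F) = Fintype.card F ^ n ^ 2 := by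
  classical
  show Fintype.card (Fin n → Fin n → F) = _
  rw [Fintype.card_fun]
  rw [Fintype.card_fun]
  rw [Fintype.card_fin, ← pow_mul, sq]

lemma psiM_eq_zero_iff (C : Matrix (Fin n) (Fin n) F) : psiM F C = 0 ↔ C = 0 := by
  constructor
  · intro h
    ext i j
    rw [AddChar.eq_zero_iff] at h
    by_contra hij
    refine chi_mulShift_ne F (C i j) hij ?_
    rw [AddChar.eq_zero_iff]
    intro t
    rw [AddChar.mulShift_apply, ← trace_mul_std F C i j t]
    exact h _
  · rintro rfl
    rw [AddChar.eq_zero_iff]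
    intro Y
    rw [psiM_apply]
    simp

lemma sum_psi_mul (C : Matrix (Fin n) (Fin n) F) [DecidableEq F] :
    ∑ Y : Matrix (Fin n) (Fin n) F, psi F (C * Y)
      = if C = 0 then ((Fintype.card F : ℂ) ^ n ^ 2) else 0 := by
  classical
  have : ∀ Y, psi F (C * Y) = psiM F C Y := fun Y => psi_eq F _
  simp only [this]
  rw [AddChar.sum_eq_ite]
  rw [card_matrix]
  by_cases h : C = 0
  · rw [if_pos h, if_pos ((psiM_eq_zero_iff F C).mpr h)]; push_cast; ring
  · rw [if_neg h, if_neg (fun hh => h ((psiM_eq_zero_iff F C).mp hh))]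

end MatAux3

namespace MatAux4
open MatAux MatAux2 MatAux3

variable (F : Type) [Field F] [Fintype F] {n : ℕ}

lemma psi_trace_congr {X Y : Matrix (Fin n) (Fin n) F} (h : X.trace = Y.trace) :
    psi F X = psi F Y := by rw [psi_eq, psi_eq, h]

lemma psi_add (X Y : Matrix (Fin n) (Fin n) F) : psi F (X + Y) = psi F X * psi F Y := by
  rw [psi_eq, psi_eq, psi_eq, Matrix.trace_add, AddChar.map_add_eq_mul]

lemma psi_zero : psi F (0 : Matrix (Fin n) (Fin n) F) = 1 := by
  rw [psi_eq]; simp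

lemma abs_psi (X : Matrix (Fin n) (Fin n) F) : ‖psi F X‖ = 1 := by
  rw [psi_eq]; exact abs_chi F _

lemma conj_psi (X : Matrix (Fin n) (Fin n) F) :
    (starRingEnd ℂ) (psi F X) = psi F (-X) := by
  have h1 : psi F X * psi F (-X) = 1 := by
    rw [← psi_add, add_neg_cancel, psi_zero]
  have h2 : psi F X * (starRingEnd ℂ) (psi F X) = 1 := by
    rw [Complex.mul_conj]
    norm_cast
    rw [← Complex.sq_norm, abs_psi]
    norm_num
  have hne : psi F X ≠ 0 := by
    intro h; rw [h, zero_mul] at h1; exact zero_ne_one h1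
  exact mul_left_cancel₀ hne (h2.trans h1.symm)

lemma trace_identity (A X Y : Matrix (Fin n) (Fin n) F) :
    (A * (X * Y + Y * X)).trace = ((X * A + A * X) * Y).trace := by
  rw [Matrix.mul_add, Matrix.trace_add, Matrix.add_mul, Matrix.trace_add,
    add_comm ((X * A * Y).trace)]
  congr 1
  · rw [← Matrix.mul_assoc]
  · rw [← Matrix.mul_assoc, Matrix.trace_mul_cycle]

lemma mem_radical_iff (A X : Matrix (Fin n) (Fin n) F) :
    X ∈ radical F A ↔ X * A + A * X = 0 := by
  constructor
  · intro h
    ext i j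
    have := h (Matrix.single j i 1)
    rw [trace_identity, trace_mul_std, mul_one] at this
    simpa using this
  · intro h Y
    rw [trace_identity, h, Matrix.zero_mul, Matrix.trace_zero]

lemma card_radical (A : Matrix (Fin n) (Fin n) F) [DecidableEq F] :
    (Finset.univ.filter (fun X : Matrix (Fin n) (Fin n) F => X * A + A * X = 0)).card
      = Fintype.card F ^ rho F A := by
  classical
  rw [rho, ← Module.card_eq_pow_finrank (K := F) (V := radical F A)]
  rw [← Fintype.card_subtype]
  exact (Fintype.card_congr
    (Equiv.subtypeEquivRight fun X => (mem_radical_iff F A X))).symm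

lemma gauss_key (A B : Matrix (Fin n) (Fin n) F) [DecidableEq F] :
    matGaussSum F A B * (starRingEnd ℂ) (matGaussSum F A B)
      = ∑ Z : Matrix (Fin n) (Fin n) F, psi F (A * Z ^ 2 + B * Z) *
          (if Z * A + A * Z = 0 then ((Fintype.card F : ℂ) ^ n ^ 2) else 0) := by
  classical
  have e0 : matGaussSum F A B * (starRingEnd ℂ) (matGaussSum F A B)
      = ∑ Y : Matrix (Fin n) (Fin n) F, ∑ X : Matrix (Fin n) (Fin n) F,
          psi F (A * X ^ 2 + B * X) * psi F (-(A * Y ^ 2 + B * Y)) := by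
    rw [matGaussSum, map_sum, Finset.sum_mul_sum, Finset.sum_comm]
    simp only [conj_psi]
  rw [e0]
  have e1 : ∀ Y : Matrix (Fin n) (Fin n) F,
      ∑ X : Matrix (Fin n) (Fin n) F,
          psi F (A * X ^ 2 + B * X) * psi F (-(A * Y ^ 2 + B * Y))
        = ∑ Z : Matrix (Fin n) (Fin n) F,
            psi F ((Z * A + A * Z) * Y) * psi F (A * Z ^ 2 + B * Z) := by
    intro Y
    rw [← Fintype.sum_equiv (Equiv.addLeft Y)
      (fun Z => psi F (A * (Y + Z) ^ 2 + B * (Y + Z)) * psi F (-(A * Y ^ 2 + B * Y)))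
      (fun X => psi F (A * X ^ 2 + B * X) * psi F (-(A * Y ^ 2 + B * Y)))
      (fun Z => rfl)]
    refine Finset.sum_congr rfl fun Z _ => ?_
    rw [← psi_add, ← psi_add]
    have harg : A * (Y + Z) ^ 2 + B * (Y + Z) + -(A * Y ^ 2 + B * Y)
        = A * (Z * Y + Y * Z) + (A * Z ^ 2 + B * Z) := by noncomm_ring
    rw [harg, psi_add F (A * (Z * Y + Y * Z)) (A * Z ^ 2 + B * Z),
      psi_add F ((Z * A + A * Z) * Y) (A * Z ^ 2 + B * Z)]
    congr 1
    exact psi_trace_congr F (trace_identity F A Z Y)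
  simp only [e1]
  rw [Finset.sum_comm]
  refine Finset.sum_congr rfl fun Z _ => ?_
  rw [← Finset.sum_mul, mul_comm (psi F (A * Z ^ 2 + B * Z)), sum_psi_mul]

lemma gauss_bound (A B : Matrix (Fin n) (Fin n) F) [DecidableEq F] :
    ‖matGaussSum F A B‖
      ≤ Real.sqrt ((Fintype.card F : ℝ) ^ (n ^ 2 + rho F A)) := by
  classical
  have h2 : ‖matGaussSum F A B‖ ^ 2
      ≤ (Fintype.card F : ℝ) ^ (n ^ 2 + rho F A) := by
    have : ‖matGaussSum F A B‖ ^ 2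
        = ‖matGaussSum F A B * (starRingEnd ℂ) (matGaussSum F A B)‖ := by
      rw [norm_mul, Complex.norm_conj, sq]
    rw [this, gauss_key]
    calc ‖∑ Z : Matrix (Fin n) (Fin n) F, psi F (A * Z ^ 2 + B * Z) *
          (if Z * A + A * Z = 0 then ((Fintype.card F : ℂ) ^ n ^ 2) else 0)‖
        ≤ ∑ Z : Matrix (Fin n) (Fin n) F,
            ‖psi F (A * Z ^ 2 + B * Z) *
              (if Z * A + A * Z = 0 then ((Fintype.card F : ℂ) ^ n ^ 2) else 0)‖ := by
          exact norm_sum_le _ _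
      _ = ∑ Z : Matrix (Fin n) (Fin n) F,
            (if Z * A + A * Z = 0 then ((Fintype.card F : ℝ) ^ n ^ 2) else 0) := by
          refine Finset.sum_congr rfl fun Z _ => ?_
          rw [norm_mul, abs_psi, one_mul]
          split_ifs
          · rw [norm_pow]; norm_num
          · simp
      _ = ((Finset.univ.filter
            (fun Z : Matrix (Fin n) (Fin n) F => Z * A + A * Z = 0)).card : ℝ)
            * (Fintype.card F : ℝ) ^ n ^ 2 := by
          rw [Finset.sum_ite, Finset.sum_const, Finset.sum_const_zero, add_zero,
            nsmul_eq_mul]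
      _ = (Fintype.card F : ℝ) ^ (n ^ 2 + rho F A) := by
          rw [card_radical, pow_add]
          push_cast
          ring
  have hnn : (0:ℝ) ≤ ‖matGaussSum F A B‖ := norm_nonneg _
  rw [← Real.sqrt_sq hnn]
  exact Real.sqrt_le_sqrt h2

variable {F}

def coordMap (F : Type) [Field F] (i j : Fin 2) :
    Matrix (Fin 2) (Fin 2) F →ₗ[F] F where
  toFun X := X i j
  map_add' := fun _ _ => rfl
  map_smul' := fun _ _ => rfl

lemma entry_eq (A X : Matrix (Fin 2) (Fin 2) F) (hX : X ∈ radical F A) (i j : Fin 2) :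
    (∑ k, X i k * A k j) + (∑ k, A i k * X k j) = 0 := by
  have hm := (mem_radical_iff F A X).mp hX
  have := congrFun (congrFun hm i) j
  simpa [Matrix.add_apply, Matrix.mul_apply] using this

lemma rho_le_one (h2 : (2:F) ≠ 0) (A : Matrix (Fin 2) (Fin 2) F) (ht : A.trace ≠ 0) :
    rho F A ≤ 1 := by
  classical
  rw [Matrix.trace_fin_two] at ht
  have hinj : Function.Injective
      ((Matrix.traceLinearMap (Fin 2) F F).comp (radical F A).subtype) := by
    rw [← LinearMap.ker_eq_bot, LinearMap.ker_eq_bot']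
    rintro ⟨X, hX⟩ htr
    have htr' : X 0 0 + X 1 1 = 0 := by
      have : X.trace = 0 := htr
      rwa [Matrix.trace_fin_two] at this
    have e00 := entry_eq A X hX 0 0
    have e01 := entry_eq A X hX 0 1
    have e10 := entry_eq A X hX 1 0
    have e11 := entry_eq A X hX 1 1
    simp only [Fin.sum_univ_two] at e00 e01 e10 e11
    have hx01 : X 0 1 = 0 := by
      have h : (A 0 0 + A 1 1) * X 0 1 = 0 := by linear_combination e01 - A 0 1 * htr'
      exact (mul_eq_zero.mp h).resolve_left ht
    have hx10 : X 1 0 = 0 := by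
      have h : (A 0 0 + A 1 1) * X 1 0 = 0 := by linear_combination e10 - A 1 0 * htr'
      exact (mul_eq_zero.mp h).resolve_left ht
    have hx00 : X 0 0 = 0 := by
      have h : (2 * (A 0 0 + A 1 1)) * X 0 0 = 0 := by
        linear_combination e00 - e11 + 2 * A 1 1 * htr'
      rcases mul_eq_zero.mp h with h' | h'
      · exact absurd h' (mul_ne_zero h2 ht)
      · exact h'
    have hx11 : X 1 1 = 0 := by linear_combination htr' - hx00
    ext i j
    fin_cases i <;> fin_cases j <;> assumption
  have hle := LinearMap.finrank_le_finrank_of_injective hinj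
  simpa [rho] using hle

lemma rho_le_two_of_inj (A : Matrix (Fin 2) (Fin 2) F) (i j k l : Fin 2)
    (h : ∀ X, X ∈ radical F A → X i j = 0 → X k l = 0 → X = 0) : rho F A ≤ 2 := by
  classical
  have hinj : Function.Injective
      ((((coordMap F i j).comp (radical F A).subtype)).prod
        ((coordMap F k l).comp (radical F A).subtype)) := by
    rw [← LinearMap.ker_eq_bot, LinearMap.ker_eq_bot']
    rintro ⟨X, hX⟩ hv
    have h1 : X i j = 0 := congrArg Prod.fst hv
    have h2 : X k l = 0 := congrArg Prod.snd hv
    exact Subtype.ext (h X hX h1 h2)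
  have hle := LinearMap.finrank_le_finrank_of_injective hinj
  simpa [rho, Module.finrank_prod] using hle

lemma rho_le_two (h2 : (2:F) ≠ 0) (A : Matrix (Fin 2) (Fin 2) F) (hA : A ≠ 0) :
    rho F A ≤ 2 := by
  classical
  by_cases ht : A.trace = 0
  case neg => exact le_trans (rho_le_one h2 A ht) one_le_two
  rw [Matrix.trace_fin_two] at ht
  by_cases ha : A 0 0 ≠ 0
  · refine rho_le_two_of_inj A 0 1 1 0 (fun X hX hx01 hx10 => ?_)
    have e00 := entry_eq A X hX 0 0
    have e11 := entry_eq A X hX 1 1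
    simp only [Fin.sum_univ_two] at e00 e11
    have hx00 : X 0 0 = 0 := by
      have h : (2 * A 0 0) * X 0 0 = 0 := by
        linear_combination e00 - A 1 0 * hx01 - A 0 1 * hx10
      exact (mul_eq_zero.mp h).resolve_left (mul_ne_zero h2 ha)
    have hx11 : X 1 1 = 0 := by
      have h : (2 * A 0 0) * X 1 1 = 0 := by
        linear_combination -e11 + A 0 1 * hx10 + A 1 0 * hx01 + 2 * X 1 1 * ht
      exact (mul_eq_zero.mp h).resolve_left (mul_ne_zero h2 ha)
    ext i j; fin_cases i <;> fin_cases j <;> assumption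
  push_neg at ha
  have hd : A 1 1 = 0 := by linear_combination ht - ha
  by_cases hb : A 0 1 ≠ 0
  · refine rho_le_two_of_inj A 0 0 0 1 (fun X hX hx00 hx01 => ?_)
    have e00 := entry_eq A X hX 0 0
    have e01 := entry_eq A X hX 0 1
    simp only [Fin.sum_univ_two] at e00 e01
    have hx11 : X 1 1 = 0 := by
      have h : A 0 1 * X 1 1 = 0 := by
        linear_combination e01 - A 0 1 * hx00 - A 1 1 * hx01 - A 0 0 * hx01
      exact (mul_eq_zero.mp h).resolve_left hb
    have hx10 : X 1 0 = 0 := by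
      have h : A 0 1 * X 1 0 = 0 := by
        linear_combination e00 - 2 * X 0 0 * ha - A 1 0 * hx01
      exact (mul_eq_zero.mp h).resolve_left hb
    ext i j; fin_cases i <;> fin_cases j <;> assumption
  push_neg at hb
  have hc : A 1 0 ≠ 0 := by
    intro hc
    apply hA
    ext i j; fin_cases i <;> fin_cases j <;> assumption
  refine rho_le_two_of_inj A 0 0 1 0 (fun X hX hx00 hx10 => ?_)
  have e00 := entry_eq A X hX 0 0
  have e10 := entry_eq A X hX 1 0
  simp only [Fin.sum_univ_two] at e00 e10
  have hx11 : X 1 1 = 0 := by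
    have h : A 1 0 * X 1 1 = 0 := by
      linear_combination e10 - A 1 0 * hx00 - A 0 0 * hx10 - A 1 1 * hx10
    exact (mul_eq_zero.mp h).resolve_left hc
  have hx01 : X 0 1 = 0 := by
    have h : A 1 0 * X 0 1 = 0 := by
      linear_combination e00 - 2 * X 0 0 * ha - A 0 1 * hx10
    exact (mul_eq_zero.mp h).resolve_left hc
  ext i j; fin_cases i <;> fin_cases j <;> assumption

variable (F)

lemma psi_sum {ι : Type*} (s : Finset ι) (f : ι → Matrix (Fin n) (Fin n) F) :
    psi F (∑ i ∈ s, f i) = ∏ i ∈ s, psi F (f i) := by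
  classical
  induction s using Finset.induction_on with
  | empty => simp [psi_zero]
  | insert a s h ih =>
    rw [Finset.sum_insert h, Finset.prod_insert h, psi_add, ih]

lemma sum_pi_prod {r : ℕ} (g : Fin r → Matrix (Fin n) (Fin n) F → ℂ) :
    ∑ A : Fin r → Matrix (Fin n) (Fin n) F, ∏ i, g i (A i)
      = ∏ i, ∑ X : Matrix (Fin n) (Fin n) F, g i X := by
  classical
  rw [← Finset.sum_prod_piFinset]
  rw [Fintype.piFinset_univ]

lemma card_trace_zero [DecidableEq F] :
    (Finset.univ.filter (fun A : Matrix (Fin 2) (Fin 2) F => A.trace = 0)).card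
      = Fintype.card F ^ 3 := by
  classical
  rw [← Fintype.card_subtype]
  have e : {A : Matrix (Fin 2) (Fin 2) F // A.trace = 0} ≃ (F × F × F) :=
    { toFun := fun A => (A.1 0 0, A.1 0 1, A.1 1 0)
      invFun := fun p => ⟨!![p.1, p.2.1; p.2.2, -p.1], by simp [Matrix.trace_fin_two]⟩
      left_inv := by
        rintro ⟨A, hA⟩
        rw [Matrix.trace_fin_two] at hA
        apply Subtype.ext
        ext i j
        fin_cases i <;> fin_cases j <;> simp <;> linear_combination -hA
      right_inv := by rintro ⟨x, y, z⟩; simp }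
  rw [Fintype.card_congr e]
  simp [Fintype.card_prod]
  ring

lemma two_ne_zero_of_odd_card (h : Odd (Fintype.card F)) : (2:F) ≠ 0 := by
  intro h0
  have hdvd : (ringChar F) ∣ 2 := by
    have := (CharP.cast_eq_zero_iff F (ringChar F) 2).mp (by exact_mod_cast h0)
    exact_mod_cast this
  have hp : (ringChar F).Prime := CharP.char_is_prime F _
  have h2 : ringChar F = 2 := (Nat.prime_dvd_prime_iff_eq hp Nat.prime_two).mp hdvd
  obtain ⟨n, hn⟩ := FiniteField.card F (ringChar F)
  rw [h2] at hn
  rw [hn.2] at h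
  have : Even (2 ^ (n:ℕ)) := by
    refine (Nat.even_pow).mpr ⟨even_two, ?_⟩
    exact n.pos.ne'
  exact (Nat.not_odd_iff_even.mpr this) h

lemma sum_psi_mul' [DecidableEq F] (D : Matrix (Fin n) (Fin n) F) :
    ∑ C : Matrix (Fin n) (Fin n) F, psi F (C * D)
      = if D = 0 then ((Fintype.card F : ℂ) ^ n ^ 2) else 0 := by
  have h : ∀ C : Matrix (Fin n) (Fin n) F, psi F (C * D) = psi F (D * C) :=
    fun C => psi_trace_congr F (Matrix.trace_mul_comm _ _)
  simp only [h]
  exact sum_psi_mul F D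

lemma completion (r : ℕ) [DecidableEq F] (T : Matrix (Fin 2) (Fin 2) F)
    (M : Fin r → Matrix (Fin 2) (Fin 2) F) :
    (∑ A : Fin r → Matrix (Fin 2) (Fin 2) F,
        (if (∑ i, (A i) ^ 2) = T then (1:ℂ) else 0) *
          (starRingEnd ℂ) (psi F (∑ i, M i * A i))) * (Fintype.card F : ℂ) ^ (2 ^ 2 : ℕ)
      = ∑ C : Matrix (Fin 2) (Fin 2) F,
          psi F (-(C * T)) * ∏ i, matGaussSum F C (-(M i)) := by
  classical
  rw [Finset.sum_mul]
  have step1 : ∀ A : Fin r → Matrix (Fin 2) (Fin 2) F,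
      (if (∑ i, (A i) ^ 2) = T then (1:ℂ) else 0) *
          (starRingEnd ℂ) (psi F (∑ i, M i * A i)) * (Fintype.card F : ℂ) ^ (2 ^ 2 : ℕ)
        = ∑ C : Matrix (Fin 2) (Fin 2) F,
            psi F (C * (∑ i, (A i) ^ 2 - T)) * psi F (-(∑ i, M i * A i)) := by
    intro A
    rw [conj_psi, ← Finset.sum_mul, sum_psi_mul']
    by_cases h : (∑ i, (A i) ^ 2) = T
    · rw [if_pos h, if_pos (sub_eq_zero.mpr h), one_mul, mul_comm]
    · rw [if_neg h, if_neg (fun hh => h (sub_eq_zero.mp hh)), zero_mul, zero_mul]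
  simp only [step1]
  rw [Finset.sum_comm]
  refine Finset.sum_congr rfl fun C _ => ?_
  have step2 : ∀ A : Fin r → Matrix (Fin 2) (Fin 2) F,
      psi F (C * (∑ i, (A i) ^ 2 - T)) * psi F (-(∑ i, M i * A i))
        = psi F (-(C * T)) * ∏ i, psi F (C * (A i) ^ 2 + (-(M i)) * (A i)) := by
    intro A
    rw [← psi_add]
    have harg : C * (∑ i, (A i) ^ 2 - T) + -(∑ i, M i * A i)
        = -(C * T) + ∑ i, (C * (A i) ^ 2 + (-(M i)) * (A i)) := by
      rw [Finset.sum_add_distrib]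
      simp only [neg_mul]
      rw [← Finset.sum_neg_distrib, ← Finset.mul_sum, Matrix.mul_sub]
      abel
    rw [harg, psi_add, psi_sum]
  simp only [step2]
  rw [← Finset.mul_sum,
    sum_pi_prod F (fun i X => psi F (C * X ^ 2 + (-(M i)) * X))]
  rfl

lemma sqrt_pow'' (x : ℝ) (hx : 0 ≤ x) (k : ℕ) :
    Real.sqrt (x ^ k) = (Real.sqrt x) ^ k := by
  have h : x ^ k = ((Real.sqrt x) ^ k) ^ 2 := by
    rw [← pow_mul, mul_comm, pow_mul, Real.sq_sqrt hx]
  rw [h, Real.sqrt_sq (pow_nonneg (Real.sqrt_nonneg x) k)]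

lemma matGaussSum_zero_left [DecidableEq F] {n : ℕ} (B : Matrix (Fin n) (Fin n) F)
    (hB : B ≠ 0) : matGaussSum F 0 B = 0 := by
  rw [matGaussSum]
  have h : ∀ X : Matrix (Fin n) (Fin n) F,
      psi F ((0 : Matrix (Fin n) (Fin n) F) * X ^ 2 + B * X) = psi F (B * X) := by
    intro X; rw [Matrix.zero_mul, zero_add]
  simp only [h]
  rw [sum_psi_mul F B, if_neg hB]

lemma numeric (r : ℕ) (hr : 4 ≤ r) (s : ℝ) (hs1 : 1 ≤ s) :
    ((s ^ 2) ^ 3 * s ^ (6 * r) + (s ^ 2) ^ 4 * s ^ (5 * r))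
        * (((s ^ 2) ^ (r * 2 ^ 2))⁻¹ * ((s ^ 2) ^ (2 ^ 2 : ℕ))⁻¹)
      ≤ 2 * ((s ^ 2) ^ (r + 1))⁻¹ := by
  have hs0 : 0 < s := lt_of_lt_of_le one_pos hs1
  have key : s ^ (6 * r + 6) + s ^ (5 * r + 8) ≤ 2 * s ^ (6 * r + 6) := by
    have h1 : s ^ (5 * r + 8) ≤ s ^ (6 * r + 6) := pow_le_pow_right₀ hs1 (by omega)
    linarith
  have e1 : (s ^ 2) ^ 3 * s ^ (6 * r) + (s ^ 2) ^ 4 * s ^ (5 * r)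
      = s ^ (6 * r + 6) + s ^ (5 * r + 8) := by ring
  have e2 : ((s ^ 2) ^ (r * 2 ^ 2))⁻¹ * ((s ^ 2) ^ (2 ^ 2 : ℕ))⁻¹ = (s ^ (8 * r + 8))⁻¹ := by
    rw [← mul_inv]
    congr 1
    ring
  rw [e1, e2]
  have e3 : 2 * ((s ^ 2) ^ (r + 1))⁻¹ = 2 * s ^ (6 * r + 6) * (s ^ (8 * r + 8))⁻¹ := by
    have h1 : ((s ^ 2) ^ (r + 1)) ≠ 0 := by positivity
    have h2 : (s ^ (8 * r + 8)) ≠ 0 := by positivity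
    field_simp
    ring
  rw [e3]
  exact mul_le_mul_of_nonneg_right key (inv_nonneg.mpr (by positivity))

end MatAux4

open MatAux MatAux2 MatAux3 MatAux4 in
/-- Proposition 4.1, Fourier part: for `r ≥ 4` and `M ≠ 0`,
`|σ̂_T(M)| ≤ c q^{-r-1}` uniformly over odd `q` and `T ∈ M_2(F_q)`. -/
theorem matSphere_fourier_rank_two (r : ℕ) (hr : 4 ≤ r) :
    ∃ c : ℝ, 0 < c ∧
      ∀ (F : Type) [Field F] [Fintype F] [DecidableEq F],
        Odd (Fintype.card F) →
        ∀ T : Matrix (Fin 2) (Fin 2) F,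
          ∀ M : Fin r → Matrix (Fin 2) (Fin 2) F, M ≠ 0 →
            ‖
                (matFourier F (fun X => if (∑ i, (X i) ^ 2) = T then (1 : ℂ) else 0) M)‖ ≤
              c * ((Fintype.card F : ℝ) ^ (r + 1))⁻¹ := by
  refine ⟨2, two_pos, ?_⟩
  intro F _inst1 _inst2 _inst3 hodd T M hM
  classical
  have h2 : (2:F) ≠ 0 := two_ne_zero_of_odd_card F hodd
  obtain ⟨i0, hi0⟩ : ∃ i, M i ≠ 0 := by
    by_contra h; push_neg at h; exact hM (funext h)
  have hq1 : 1 < Fintype.card F := Fintype.one_lt_card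
  set Q : ℝ := (Fintype.card F : ℝ) with hQ
  have hQ1 : (1:ℝ) ≤ Q := by rw [hQ]; exact_mod_cast hq1.le
  have hQ0 : (0:ℝ) < Q := lt_of_lt_of_le one_pos hQ1
  set s : ℝ := Real.sqrt Q with hs
  have hs1 : (1:ℝ) ≤ s := by
    rw [hs, show (1:ℝ) = Real.sqrt 1 from (Real.sqrt_one).symm]
    exact Real.sqrt_le_sqrt (by simpa using hQ1)
  have hs0 : (0:ℝ) < s := lt_of_lt_of_le one_pos hs1
  have hQs : Q = s ^ 2 := (Real.sq_sqrt hQ0.le).symm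
  have hqC : ((Fintype.card F : ℂ)) ≠ 0 := by
    exact_mod_cast (by omega : Fintype.card F ≠ 0)
  set R : ℂ := ∑ C : Matrix (Fin 2) (Fin 2) F,
      psi F (-(C * T)) * ∏ i, matGaussSum F C (-(M i)) with hR
  -- Step 1: rewrite the Fourier transform via completion of the sphere indicator
  have hinner : (∑ A : Fin r → Matrix (Fin 2) (Fin 2) F,
        (if (∑ i, (A i) ^ 2) = T then (1:ℂ) else 0) *
          (starRingEnd ℂ) (psi F (∑ i, M i * A i)))
      = ((Fintype.card F : ℂ) ^ (2 ^ 2 : ℕ))⁻¹ * R := by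
    have h4 : ((Fintype.card F : ℂ) ^ (2 ^ 2 : ℕ)) ≠ 0 := pow_ne_zero _ hqC
    rw [hR, ← completion F r T M]
    rw [mul_comm (((Fintype.card F : ℂ) ^ (2 ^ 2 : ℕ))⁻¹), mul_inv_cancel_right₀ h4]
  have hmf : matFourier F (fun X => if (∑ i, (X i) ^ 2) = T then (1 : ℂ) else 0) M
      = ((Fintype.card F : ℂ) ^ (r * 2 ^ 2))⁻¹ *
          (((Fintype.card F : ℂ) ^ (2 ^ 2 : ℕ))⁻¹ * R) := by
    rw [matFourier, hinner]
  rw [hmf, norm_mul, norm_mul, norm_inv, norm_inv, norm_pow, norm_pow, Complex.norm_natCast, ← hQ]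
  -- Step 2: bound |R|
  have hbound : ‖R‖ ≤ Q ^ 3 * s ^ (6 * r) + Q ^ 4 * s ^ (5 * r) := by
    have hzero : psi F (-((0 : Matrix (Fin 2) (Fin 2) F) * T)) *
        ∏ i, matGaussSum F (0 : Matrix (Fin 2) (Fin 2) F) (-(M i)) = 0 := by
      have hz : matGaussSum F (0 : Matrix (Fin 2) (Fin 2) F) (-(M i0)) = 0 :=
        matGaussSum_zero_left F _ (neg_ne_zero.mpr hi0)
      rw [Finset.prod_eq_zero (Finset.mem_univ i0) hz, mul_zero]
    have hE : R = ∑ C ∈ Finset.univ.erase (0 : Matrix (Fin 2) (Fin 2) F),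
        psi F (-(C * T)) * ∏ i, matGaussSum F C (-(M i)) :=
      (Finset.sum_erase (f := fun C : Matrix (Fin 2) (Fin 2) F =>
        psi F (-(C * T)) * ∏ i, matGaussSum F C (-(M i))) Finset.univ hzero).symm
    rw [hE]
    calc ‖∑ C ∈ Finset.univ.erase (0 : Matrix (Fin 2) (Fin 2) F),
            psi F (-(C * T)) * ∏ i, matGaussSum F C (-(M i))‖
        ≤ ∑ C ∈ Finset.univ.erase (0 : Matrix (Fin 2) (Fin 2) F),
            ‖psi F (-(C * T)) * ∏ i, matGaussSum F C (-(M i))‖ :=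
          norm_sum_le _ _
      _ ≤ ∑ C ∈ Finset.univ.erase (0 : Matrix (Fin 2) (Fin 2) F),
            (if C.trace = 0 then s ^ (6 * r) else s ^ (5 * r)) := by
          refine Finset.sum_le_sum fun C hC => ?_
          have hC0 : C ≠ 0 := (Finset.mem_erase.mp hC).1
          rw [norm_mul, abs_psi, one_mul, norm_prod]
          calc ∏ i, ‖matGaussSum F C (-(M i))‖
              ≤ ∏ _i : Fin r, s ^ (2 ^ 2 + rho F C) := by
                refine Finset.prod_le_prod (fun i _ => norm_nonneg _)
                  (fun i _ => ?_)
                have hg := gauss_bound F C (-(M i))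
                rwa [sqrt_pow'' Q hQ0.le] at hg
            _ = s ^ ((2 ^ 2 + rho F C) * r) := by
                rw [Finset.prod_const, Finset.card_univ, Fintype.card_fin, ← pow_mul]
            _ ≤ (if C.trace = 0 then s ^ (6 * r) else s ^ (5 * r)) := by
                split_ifs with htr
                · refine pow_le_pow_right₀ hs1 (Nat.mul_le_mul_right _ ?_)
                  have := rho_le_two h2 C hC0
                  omega
                · refine pow_le_pow_right₀ hs1 (Nat.mul_le_mul_right _ ?_)
                  have := rho_le_one h2 C htr
                  omega
      _ ≤ ∑ C : Matrix (Fin 2) (Fin 2) F,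
            (if C.trace = 0 then s ^ (6 * r) else s ^ (5 * r)) := by
          refine Finset.sum_le_sum_of_subset_of_nonneg (Finset.erase_subset _ _)
            (fun C _ _ => ?_)
          split_ifs <;> positivity
      _ = ((Finset.univ.filter (fun C : Matrix (Fin 2) (Fin 2) F => C.trace = 0)).card : ℝ)
              * s ^ (6 * r)
            + ((Finset.univ.filter
                (fun C : Matrix (Fin 2) (Fin 2) F => ¬ C.trace = 0)).card : ℝ)
              * s ^ (5 * r) := by
          rw [Finset.sum_ite, Finset.sum_const, Finset.sum_const, nsmul_eq_mul, nsmul_eq_mul]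
      _ ≤ Q ^ 3 * s ^ (6 * r) + Q ^ 4 * s ^ (5 * r) := by
          refine add_le_add ?_ ?_
          · refine mul_le_mul_of_nonneg_right ?_ (by positivity)
            rw [card_trace_zero]
            rw [hQ]
            push_cast
            exact le_rfl
          · refine mul_le_mul_of_nonneg_right ?_ (by positivity)
            have hle : (Finset.univ.filter
                (fun C : Matrix (Fin 2) (Fin 2) F => ¬ C.trace = 0)).card
                ≤ Fintype.card F ^ 4 := by
              calc _ ≤ Finset.univ.card := Finset.card_filter_le _ _
                _ = Fintype.card (Matrix (Fin 2) (Fin 2) F) := Finset.card_univ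
                _ = Fintype.card F ^ 4 := by rw [card_matrix]; norm_num
            rw [hQ]
            exact_mod_cast hle
  -- Step 3: conclude with the numeric estimate
  have hnum := numeric r hr s hs1
  rw [← hQs] at hnum
  calc (Q ^ (r * 2 ^ 2))⁻¹ * ((Q ^ (2 ^ 2 : ℕ))⁻¹ * ‖R‖)
      = ‖R‖ * ((Q ^ (r * 2 ^ 2))⁻¹ * (Q ^ (2 ^ 2 : ℕ))⁻¹) := by ring
    _ ≤ (Q ^ 3 * s ^ (6 * r) + Q ^ 4 * s ^ (5 * r))
          * ((Q ^ (r * 2 ^ 2))⁻¹ * (Q ^ (2 ^ 2 : ℕ))⁻¹) :=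
        mul_le_mul_of_nonneg_right hbound (by positivity)
    _ ≤ 2 * (Q ^ (r + 1))⁻¹ := hnum
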